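/- Let (a_0, ..., a_n) be a sequence of real numbers and let A be the n×n symmetric tridiagonal matrix with diagonal entries A_{ii} = a_{i-1} + a_i for i = 1,...,n, off-diagonal entries A_{i,i+1} = A_{i+1,i} = -a_i, and all other entries zero. Then det(A) = Σ_{j=0}^{n} ∏_{i≠j} a_i. In particular, if all a_i are nonzero, det(A) = (∏_{i=0}^{n} a_i)·(Σ_{i=0}^{n} a_i^{-1}). -/

import Mathlib

open Finset


def Tmat (n : ℕ) (a : Fin (n + 1) → ℝ) : Matrix (Fin n) (Fin n) ℝ :=
  Matrix.of fun i j : Fin n =>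
    if i = j then a i.castSucc + a i.succ
    else if (j : ℕ) = (i : ℕ) + 1 then -a i.succ
    else if (i : ℕ) = (j : ℕ) + 1 then -a j.succ
    else 0

lemma rowsumT {n : ℕ} (a : Fin (n + 2) → ℝ) (i : Fin (n + 1)) :
    (∑ j, Tmat (n + 1) a i j)
      = (if i = 0 then a 0 else 0) + (if i = Fin.last n then a (Fin.last (n + 1)) else 0) := by
  have hdecomp : ∀ j : Fin (n + 1), Tmat (n + 1) a i j =
      (if i = j then a i.castSucc + a i.succ else 0)
      + (if (j : ℕ) = (i : ℕ) + 1 then -a i.succ else 0)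
      + (if (i : ℕ) = (j : ℕ) + 1 then -a j.succ else 0) := by
    intro j
    simp only [Tmat, Matrix.of_apply]
    rcases eq_or_ne i j with h1 | h1
    · have hv : (i : ℕ) = (j : ℕ) := congrArg Fin.val h1
      rw [if_pos h1, if_pos h1, if_neg (by omega), if_neg (by omega)]; ring
    · have hv : (i : ℕ) ≠ (j : ℕ) := fun h => h1 (Fin.ext h)
      rw [if_neg h1, if_neg h1]
      by_cases h2 : (j : ℕ) = (i : ℕ) + 1
      · rw [if_pos h2, if_pos h2, if_neg (by omega)]; ring
      · rw [if_neg h2, if_neg h2]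
        by_cases h3 : (i : ℕ) = (j : ℕ) + 1
        · rw [if_pos h3]; ring
        · rw [if_neg h3]; ring
  rw [Finset.sum_congr rfl fun j _ => hdecomp j, Finset.sum_add_distrib,
    Finset.sum_add_distrib]
  have s1 : (∑ j, if i = j then a i.castSucc + a i.succ else 0)
      = a i.castSucc + a i.succ := by
    rw [Finset.sum_ite_eq Finset.univ i]; simp
  have s2 : (∑ j : Fin (n+1), if (j : ℕ) = (i : ℕ) + 1 then -a i.succ else 0)
      = if i = Fin.last n then 0 else -a i.succ := by
    by_cases hi : i = Fin.last n
    · rw [if_pos hi]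
      refine Finset.sum_eq_zero fun j _ => if_neg ?_
      have hj := j.isLt
      have : (i : ℕ) = n := by rw [hi]; rfl
      omega
    · rw [if_neg hi]
      have hne : (i : ℕ) ≠ n := fun h => hi (Fin.ext (by simpa [Fin.last] using h))
      have hlt : (i : ℕ) + 1 < n + 1 := by have := i.isLt; omega
      rw [Finset.sum_eq_single (⟨(i : ℕ) + 1, hlt⟩ : Fin (n+1))
        (fun j _ hj => if_neg fun hc => hj (Fin.ext (by simpa using hc)))
        (fun h => absurd (Finset.mem_univ _) h)]
      exact if_pos rfl
  have s3 : (∑ j : Fin (n+1), if (i : ℕ) = (j : ℕ) + 1 then -a j.succ else 0)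
      = if i = 0 then 0 else -a i.castSucc := by
    by_cases hi : i = 0
    · rw [if_pos hi]
      refine Finset.sum_eq_zero fun j _ => if_neg ?_
      have : (i : ℕ) = 0 := by rw [hi]; rfl
      omega
    · rw [if_neg hi]
      have hpos : 0 < (i : ℕ) := by
        rcases Nat.eq_zero_or_pos (i : ℕ) with h | h
        · exact absurd (Fin.ext (by simpa using h)) hi
        · exact h
      have hlt : (i : ℕ) - 1 < n + 1 := by have := i.isLt; omega
      rw [Finset.sum_eq_single (⟨(i : ℕ) - 1, hlt⟩ : Fin (n+1))
        (fun j _ hj => if_neg fun hc => hj (Fin.ext (by simp; omega)))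
        (fun h => absurd (Finset.mem_univ _) h)]
      rw [if_pos (by simp; omega)]
      have hsucc : (⟨(i : ℕ) - 1, hlt⟩ : Fin (n+1)).succ = i.castSucc :=
        Fin.ext (by simp [Fin.val_succ]; omega)
      rw [hsucc]
  rw [s1, s2, s3]
  by_cases h0 : i = 0 <;> by_cases hl : i = Fin.last n
  · have e1 : i.castSucc = (0 : Fin (n+2)) := Fin.ext (by simp [h0])
    have e2 : i.succ = Fin.last (n+1) := Fin.ext (by simp [hl])
    simp only [if_pos h0, if_pos hl, e1, e2]; ring
  · have e1 : i.castSucc = (0 : Fin (n+2)) := Fin.ext (by simp [h0])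
    simp only [if_pos h0, if_neg hl, e1]; ring
  · have e2 : i.succ = Fin.last (n+1) := Fin.ext (by simp [hl])
    simp only [if_neg h0, if_pos hl, e2]; ring
  · simp only [if_neg h0, if_neg hl]; ring

lemma prod_erase_eq_prod_ite {n : ℕ} (a : Fin n → ℝ) (j : Fin n) :
    ∏ i ∈ Finset.univ.erase j, a i = ∏ i, (if i = j then 1 else a i) := by
  rw [← Finset.mul_prod_erase Finset.univ (fun i => if i = j then (1:ℝ) else a i)
    (Finset.mem_univ j), if_pos rfl, one_mul]
  exact Finset.prod_congr rfl fun i hi => (if_neg (Finset.ne_of_mem_erase hi)).symm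

lemma minor_zero {n : ℕ} (a : Fin (n + 2) → ℝ) :
    (Tmat (n + 1) a).submatrix Fin.succ Fin.succ = Tmat n (fun i => a i.succ) := by
  ext i j
  have hcs : (i.succ).castSucc = (i.castSucc).succ := Fin.ext rfl
  simp only [Tmat, Matrix.of_apply, Matrix.submatrix_apply]
  rcases eq_or_ne i j with h | h
  · subst h
    rw [if_pos rfl, if_pos rfl, hcs]
  · rw [if_neg (fun hc => h (Fin.succ_inj.mp hc)), if_neg h]
    by_cases h2 : (j : ℕ) = (i : ℕ) + 1
    · rw [if_pos (by simp [Fin.val_succ, h2]), if_pos h2]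
    · rw [if_neg (by simp [Fin.val_succ]; omega), if_neg h2]
      by_cases h3 : (i : ℕ) = (j : ℕ) + 1
      · rw [if_pos (by simp [Fin.val_succ, h3]), if_pos h3]
      · rw [if_neg (by simp [Fin.val_succ]; omega), if_neg h3]

lemma minor_last {n : ℕ} (a : Fin (n + 2) → ℝ) :
    ((Tmat (n + 1) a).submatrix Fin.castSucc Fin.succ).det
      = ∏ i : Fin n, -a ((i.castSucc).succ) := by
  rw [Matrix.det_of_lowerTriangular _ ?_]
  · refine Finset.prod_congr rfl fun i _ => ?_
    simp only [Tmat, Matrix.of_apply, Matrix.submatrix_apply]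
    rw [if_neg (fun hc : i.castSucc = i.succ => by
      have := congrArg Fin.val hc; simp [Fin.val_succ] at this),
      if_pos (by simp [Fin.val_succ])]
  · intro i j hij
    have h : (i : ℕ) < (j : ℕ) := hij
    simp only [Tmat, Matrix.of_apply, Matrix.submatrix_apply]
    rw [if_neg (fun hc : i.castSucc = j.succ => by
        have := congrArg Fin.val hc; simp [Fin.val_succ] at this; omega),
      if_neg (by simp [Fin.val_succ]; omega),
      if_neg (by simp [Fin.val_succ]; omega)]

lemma detT (n : ℕ) (a : Fin (n + 1) → ℝ) :
    (Tmat n a).det = ∑ j : Fin (n + 1), ∏ i ∈ Finset.univ.erase j, a i := by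
  induction n with
  | zero => simp [Tmat, Matrix.det_fin_zero]
  | succ n ih =>
    set A := Tmat (n + 1) a with hA
    set u : Fin (n + 1) → ℝ := fun i => if i = 0 then a 0 else 0 with hu
    set v : Fin (n + 1) → ℝ := fun i => if i = Fin.last n then a (Fin.last (n + 1)) else 0 with hv
    set E : Matrix (Fin (n + 1)) (Fin (n + 1)) ℝ :=
      Matrix.of fun i j => if j = 0 then 1 else if i = j then (1:ℝ) else 0 with hE
    have hEdet : E.det = 1 := by
      rw [Matrix.det_of_lowerTriangular E ?_]
      · refine Finset.prod_eq_one fun i _ => ?_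
        simp only [hE, Matrix.of_apply]
        split_ifs <;> rfl
      · intro i j hij
        have h : (i : ℕ) < (j : ℕ) := hij
        simp only [hE, Matrix.of_apply]
        rw [if_neg (fun hc : j = 0 => by subst hc; simp at h),
          if_neg (fun hc : i = j => by subst hc; omega)]
    have hAE : A * E = A.updateCol 0 (u + v) := by
      ext i j
      by_cases hj : j = 0
      · subst hj
        rw [Matrix.mul_apply, Matrix.updateCol_self]
        have h1 : ∀ k : Fin (n + 1), A i k * E k 0 = A i k := fun k => by simp [hE]
        rw [Finset.sum_congr rfl fun k _ => h1 k]
        have h2 := rowsumT a i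
        rw [hA, h2]
        simp [hu, hv]
      · rw [Matrix.mul_apply, Matrix.updateCol_ne hj]
        have h1 : ∀ k : Fin (n + 1), A i k * E k j = if k = j then A i j else 0 := fun k => by
          by_cases hk : k = j
          · subst hk; simp [hE, if_neg hj]
          · simp [hE, if_neg hj, if_neg hk, hk]
        rw [Finset.sum_congr rfl fun k _ => h1 k,
          Finset.sum_ite_eq' Finset.univ j fun _ => A i j]
        simp
    have hdet : A.det = (A.updateCol 0 (u + v)).det := by
      rw [← hAE, Matrix.det_mul, hEdet, mul_one]
    have hsub : ∀ c : Fin (n + 1) → ℝ, ∀ i : Fin (n + 1),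
        (A.updateCol 0 c).submatrix i.succAbove Fin.succ
          = A.submatrix i.succAbove Fin.succ := by
      intro c i
      ext r s
      simp only [Matrix.submatrix_apply]
      rw [Matrix.updateCol_ne (Fin.succ_ne_zero s)]
    have d1 : (A.updateCol 0 u).det = a 0 * (Tmat n (fun i => a i.succ)).det := by
      rw [Matrix.det_succ_column_zero]
      rw [Finset.sum_eq_single (0 : Fin (n + 1))
        (fun i _ hi => by
          rw [Matrix.updateCol_self]
          simp only [hu, if_neg hi, mul_zero, zero_mul])
        (fun h => absurd (Finset.mem_univ _) h)]
      rw [Matrix.updateCol_self, hsub, Fin.succAbove_zero]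
      have hm : A.submatrix Fin.succ Fin.succ = Tmat n (fun i => a i.succ) := by
        rw [hA]; exact minor_zero a
      rw [hm]
      simp [hu]
    have d2 : (A.updateCol 0 v).det = ∏ i : Fin (n + 1), a i.succ := by
      rw [Matrix.det_succ_column_zero]
      rw [Finset.sum_eq_single (Fin.last n)
        (fun i _ hi => by
          rw [Matrix.updateCol_self]
          simp only [hv, if_neg hi, mul_zero, zero_mul])
        (fun h => absurd (Finset.mem_univ _) h)]
      rw [Matrix.updateCol_self, hsub, Fin.succAbove_last]
      have hm : (A.submatrix Fin.castSucc Fin.succ).det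
          = ∏ i : Fin n, -a ((i.castSucc).succ) := by
        rw [hA]; exact minor_last a
      rw [hm]
      have hv1 : v (Fin.last n) = a (Fin.last (n + 1)) := by simp [hv]
      have hneg : (∏ i : Fin n, -a ((i.castSucc).succ))
          = (-1) ^ n * ∏ i : Fin n, a ((i.castSucc).succ) := by
        have hpt : ∀ i : Fin n, -a ((i.castSucc).succ) = (-1) * a ((i.castSucc).succ) :=
          fun i => by ring
        rw [Finset.prod_congr rfl fun i _ => hpt i, Finset.prod_mul_distrib,
          Finset.prod_const, Finset.card_univ, Fintype.card_fin]
      rw [hv1, Fin.val_last, hneg,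
        Fin.prod_univ_castSucc (fun i : Fin (n + 1) => a i.succ)]
      have hlast : (Fin.last n).succ = Fin.last (n + 1) := rfl
      have hsq : ((-1 : ℝ)) ^ n * (-1) ^ n = 1 := by rw [← mul_pow]; norm_num
      calc (-1 : ℝ) ^ n * a (Fin.last (n + 1))
            * ((-1) ^ n * ∏ i : Fin n, a ((i.castSucc).succ))
          = ((-1 : ℝ) ^ n * (-1) ^ n)
            * (a (Fin.last (n + 1)) * ∏ i : Fin n, a ((i.castSucc).succ)) := by ring
        _ = (∏ i : Fin n, a ((i.castSucc).succ)) * a ((Fin.last n).succ) := by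
            rw [hsq, one_mul, hlast, mul_comm]
    have hfinal := hdet
    rw [Matrix.det_updateCol_add, d1, d2, ih] at hfinal
    rw [hfinal]
    rw [Fin.sum_univ_succ (fun j : Fin (n + 2) => ∏ i ∈ Finset.univ.erase j, a i)]
    have g0 : (∏ i ∈ Finset.univ.erase (0 : Fin (n + 2)), a i)
        = ∏ i : Fin (n + 1), a i.succ := by
      rw [prod_erase_eq_prod_ite, Fin.prod_univ_succ]
      have : (if (0 : Fin (n + 2)) = 0 then (1:ℝ) else a 0) = 1 := if_pos rfl
      rw [this, one_mul]
      exact Finset.prod_congr rfl fun i _ => if_neg (Fin.succ_ne_zero i)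
    have gsucc : ∀ j : Fin (n + 1), (∏ i ∈ Finset.univ.erase (j.succ), a i)
        = a 0 * ∏ i ∈ Finset.univ.erase j, a i.succ := by
      intro j
      rw [prod_erase_eq_prod_ite, prod_erase_eq_prod_ite (fun i : Fin (n+1) => a i.succ),
        Fin.prod_univ_succ]
      have h0 : (if (0 : Fin (n + 2)) = j.succ then (1:ℝ) else a 0) = a 0 :=
        if_neg (fun hc => (Fin.succ_ne_zero j) hc.symm)
      rw [h0]
      congr 1
      exact Finset.prod_congr rfl fun i _ => by simp only [Fin.succ_inj]
    rw [g0, Finset.sum_congr rfl fun j _ => gsucc j, ← Finset.mul_sum]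
    ring

/-- Determinant of the symmetric tridiagonal gradient-form matrix with weights
`a 0, ..., a n`. Rows/columns are indexed by `Fin n` (zero-based, corresponding
to one-based indices `1, ..., n`). -/
theorem det_gradient_tridiagonal (n : ℕ) (a : Fin (n + 1) → ℝ) :
    (Matrix.of fun i j : Fin n =>
        if i = j then a i.castSucc + a i.succ
        else if (j : ℕ) = (i : ℕ) + 1 then -a i.succ
        else if (i : ℕ) = (j : ℕ) + 1 then -a j.succ
        else 0).det
      = ∑ j : Fin (n + 1), ∏ i ∈ Finset.univ.erase j, a i ∧
    ((∀ i, a i ≠ 0) →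
      (Matrix.of fun i j : Fin n =>
        if i = j then a i.castSucc + a i.succ
        else if (j : ℕ) = (i : ℕ) + 1 then -a i.succ
        else if (i : ℕ) = (j : ℕ) + 1 then -a j.succ
        else 0).det = (∏ i, a i) * ∑ i, (a i)⁻¹) := by
  constructor
  · exact detT n a
  · intro h
    rw [show (Matrix.of fun i j : Fin n =>
        if i = j then a i.castSucc + a i.succ
        else if (j : ℕ) = (i : ℕ) + 1 then -a i.succ
        else if (i : ℕ) = (j : ℕ) + 1 then -a j.succ
        else 0) = Tmat n a from rfl, detT n a, Finset.mul_sum]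
    refine Finset.sum_congr rfl fun j _ => ?_
    rw [← Finset.mul_prod_erase Finset.univ a (Finset.mem_univ j),
      mul_comm (a j), mul_assoc, mul_inv_cancel₀ (h j), mul_one]
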